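/- Let n ≥ 1, t > 0, and let f be a Schwartz function on ℝⁿ. Define the free Schrödinger evolution at time t by e^{itΔ}f := 𝓕⁻¹( k ↦ e^{−it|k|²} 𝓕f(k) ), where 𝓕 is the Fourier transform normalized to be unitary on L²(ℝⁿ). Then for every x ∈ ℝⁿ, (e^{itΔ}f)(x) = (2it)^{−n/2} e^{i|x|²/(4t)} (2π)^{−n/2} ∫_{ℝⁿ} e^{−i x·y/(2t)} e^{i|y|²/(4t)} f(y) dy, where (2it)^{n/2} is the principal branch complex power. Equivalently, e^{itΔ} = M_t D_t 𝓕 M_t, where M_t g(x) := e^{i|x|²/(4t)} g(x) and D_t g(x) := (2it)^{−n/2} g(x/(2t)). -/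

import Mathlib

open MeasureTheory Complex Real Filter
open scoped RealInnerProductSpace Topology FourierTransform

noncomputable section

lemma const_eq (n : ℕ) {t : ℝ} (ht : 0 < t) :
    (((2 * π : ℝ) ^ (-(n : ℝ) / 2) : ℝ) : ℂ) * ((π : ℂ) / (Complex.I * t)) ^ ((n : ℂ) / 2)
      = (2 * Complex.I * (t : ℂ)) ^ (-(n : ℂ) / 2) := by
  have h2π : (0:ℝ) < 2 * π := by positivity
  have hb1 : ((2 * π : ℝ) : ℂ) ≠ 0 := by exact_mod_cast h2π.ne'
  have htne : (t : ℂ) ≠ 0 := by exact_mod_cast ht.ne'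
  have hb3 : (2 * Complex.I * (t : ℂ)) ≠ 0 := by
    simp [Complex.I_ne_zero, htne]
  have hdiv : (π : ℂ) / (Complex.I * t) = ((π / t : ℝ) : ℂ) * (-Complex.I) := by
    rw [div_eq_iff (mul_ne_zero Complex.I_ne_zero htne)]
    push_cast [ht.ne']
    field_simp
    ring_nf
    simp [Complex.I_sq]
  have hb2 : ((π:ℂ) / (Complex.I * t)) ≠ 0 := by
    rw [hdiv]
    have h : (0:ℝ) < π / t := div_pos Real.pi_pos ht
    have : ((π / t : ℝ) : ℂ) ≠ 0 := by exact_mod_cast h.ne'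
    exact mul_ne_zero this (neg_ne_zero.mpr Complex.I_ne_zero)
  rw [Complex.ofReal_cpow h2π.le, Complex.cpow_def_of_ne_zero hb1,
    Complex.cpow_def_of_ne_zero hb2, Complex.cpow_def_of_ne_zero hb3, ← Complex.exp_add]
  congr 1
  have hlog1 : Complex.log ((2 * π : ℝ) : ℂ) = (Real.log (2 * π) : ℂ) :=
    (Complex.ofReal_log h2π.le).symm
  have hlog2 : Complex.log ((π:ℂ) / (Complex.I * t)) =
      (Real.log (π / t) : ℂ) + (-(π / 2)) * Complex.I := by
    rw [hdiv, Complex.log_ofReal_mul (div_pos Real.pi_pos ht) (by simp [Complex.I_ne_zero]),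
      Complex.log_neg_I]
  have hlog3 : Complex.log (2 * Complex.I * (t : ℂ)) =
      (Real.log (2 * t) : ℂ) + (π / 2) * Complex.I := by
    have : 2 * Complex.I * (t : ℂ) = ((2 * t : ℝ) : ℂ) * Complex.I := by push_cast; ring
    rw [this, Complex.log_ofReal_mul (by linarith) Complex.I_ne_zero, Complex.log_I]
  rw [hlog1, hlog2, hlog3]
  have hreal : Real.log (π / t) = Real.log (2 * π) - Real.log (2 * t) := by
    rw [Real.log_div Real.pi_pos.ne' ht.ne', Real.log_mul two_ne_zero Real.pi_pos.ne',
      Real.log_mul two_ne_zero ht.ne']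
    ring
  rw [hreal]
  push_cast
  ring

lemma exp_split {n : ℕ} {t : ℝ} (ht : 0 < t) (x y : EuclideanSpace ℝ (Fin n)) :
    Complex.exp (-(‖x - y‖ ^ 2 : ℝ) / (4 * (Complex.I * t)))
      = Complex.exp (Complex.I * (‖x‖ ^ 2 : ℝ) / (4 * (t : ℝ)))
        * (Complex.exp (-Complex.I * (⟪x, y⟫ : ℝ) / (2 * (t : ℝ)))
          * Complex.exp (Complex.I * (‖y‖ ^ 2 : ℝ) / (4 * (t : ℝ)))) := by
  rw [← Complex.exp_add, ← Complex.exp_add]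
  congr 1
  have hns : ‖x - y‖ ^ 2 = ‖x‖ ^ 2 - 2 * ⟪x, y⟫ + ‖y‖ ^ 2 := norm_sub_sq_real x y
  have htne : (t : ℂ) ≠ 0 := by exact_mod_cast ht.ne'
  rw [hns]
  push_cast
  rw [div_eq_iff (by simp [Complex.I_ne_zero, htne] : (4 : ℂ) * (Complex.I * t) ≠ 0)]
  field_simp
  ring_nf
  simp [Complex.I_sq]
  ring

lemma Ff_props {n : ℕ} (f : SchwartzMap (EuclideanSpace ℝ (Fin n)) ℂ)
    (Ff : EuclideanSpace ℝ (Fin n) → ℂ)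
    (hFf : ∀ k, Ff k = ((2 * π : ℝ) ^ (-(n : ℝ) / 2) : ℝ)
      * ∫ x : EuclideanSpace ℝ (Fin n), Complex.exp (-Complex.I * (⟪k, x⟫ : ℝ)) * f x) :
    Integrable Ff ∧ Continuous Ff := by
  set c : ℝ := (2 * π : ℝ) ^ (-(n : ℝ) / 2) with hc
  have key : ∀ k, Ff k = (c : ℂ) * 𝓕 (⇑f : EuclideanSpace ℝ (Fin n) → ℂ) ((2 * π)⁻¹ • k) := by
    intro k
    rw [hFf k, Real.fourier_eq']
    congr 1
    apply integral_congr_ae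
    filter_upwards with v
    rw [smul_eq_mul]
    congr 1
    rw [real_inner_smul_right, real_inner_comm]
    push_cast
    have hπc : ((π:ℂ)) ≠ 0 := by exact_mod_cast Real.pi_ne_zero
    congr 1
    field_simp
  have hg : 𝓕 (⇑f : EuclideanSpace ℝ (Fin n) → ℂ) = ⇑(SchwartzMap.fourierTransformCLM ℂ f) := by
    rw [SchwartzMap.fourierTransformCLM_apply, SchwartzMap.fourier_coe]
  constructor
  · have h1 : Integrable (fun k : EuclideanSpace ℝ (Fin n) =>
        𝓕 (⇑f : EuclideanSpace ℝ (Fin n) → ℂ) ((2 * π)⁻¹ • k)) := by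
      rw [hg]
      exact (integrable_comp_smul_iff volume _ (by positivity : ((2*π:ℝ))⁻¹ ≠ 0)).mpr
        (SchwartzMap.integrable _)
    exact (h1.const_mul _).congr (by filter_upwards with k using (key k).symm)
  · have h2 : Continuous fun k : EuclideanSpace ℝ (Fin n) =>
        (c : ℂ) * 𝓕 (⇑f : EuclideanSpace ℝ (Fin n) → ℂ) ((2 * π)⁻¹ • k) := by
      rw [hg]
      exact continuous_const.mul
        ((SchwartzMap.fourierTransformCLM ℂ f).continuous.comp (continuous_const_smul _))
    exact h2.congr fun k => (key k).symm

lemma J_eval {n : ℕ} (f : SchwartzMap (EuclideanSpace ℝ (Fin n)) ℂ)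
    (Ff : EuclideanSpace ℝ (Fin n) → ℂ)
    (hFf : ∀ k, Ff k = ((2 * π : ℝ) ^ (-(n : ℝ) / 2) : ℝ)
      * ∫ x : EuclideanSpace ℝ (Fin n), Complex.exp (-Complex.I * (⟪k, x⟫ : ℝ)) * f x)
    {b : ℂ} (hb : 0 < b.re) (x : EuclideanSpace ℝ (Fin n)) :
    ∫ k : EuclideanSpace ℝ (Fin n),
        Complex.exp (Complex.I * (⟪x, k⟫ : ℝ)) * (Complex.exp (-b * (‖k‖ ^ 2 : ℝ)) * Ff k)
      = (((2 * π : ℝ) ^ (-(n : ℝ) / 2) : ℝ) : ℂ) * (((π : ℂ) / b) ^ ((n : ℂ) / 2)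
          * ∫ y : EuclideanSpace ℝ (Fin n),
              Complex.exp (-(‖x - y‖ ^ 2 : ℝ) / (4 * b)) * f y) := by
  set c : ℝ := (2 * π : ℝ) ^ (-(n : ℝ) / 2) with hc
  let V := EuclideanSpace ℝ (Fin n)
  set Φ : V × V → ℂ := fun p =>
    Complex.exp (Complex.I * (⟪x, p.1⟫ : ℝ)) * Complex.exp (-b * (‖p.1‖ ^ 2 : ℝ))
      * (Complex.exp (-Complex.I * (⟪p.1, p.2⟫ : ℝ)) * f p.2) with hΦ
  -- integrability of Φ on the product
  have hmeas : AEStronglyMeasurable Φ (volume.prod volume) := by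
    apply Continuous.aestronglyMeasurable
    have c1 : Continuous fun p : V × V => ((⟪x, p.1⟫ : ℝ) : ℂ) :=
      Complex.continuous_ofReal.comp (Continuous.inner continuous_const continuous_fst)
    have c2 : Continuous fun p : V × V => ((‖p.1‖ ^ 2 : ℝ) : ℂ) :=
      Complex.continuous_ofReal.comp ((continuous_fst.norm).pow 2)
    have c3 : Continuous fun p : V × V => ((⟪p.1, p.2⟫ : ℝ) : ℂ) :=
      Complex.continuous_ofReal.comp (Continuous.inner continuous_fst continuous_snd)
    exact ((Complex.continuous_exp.comp (continuous_const.mul c1)).mul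
        (Complex.continuous_exp.comp (continuous_const.mul c2))).mul
      ((Complex.continuous_exp.comp (continuous_const.mul c3)).mul
        (f.continuous.comp continuous_snd))
  have hgauss : Integrable (fun k : V => Real.exp (-b.re * ‖k‖ ^ 2)) := by
    have := (GaussianFourier.integrable_cexp_neg_mul_sq_norm_add hb (0 : ℂ) (0 : V)).norm
    apply this.congr
    filter_upwards with v
    rw [Complex.norm_exp]
    congr 1
    simp [← Complex.ofReal_pow, Complex.mul_re]
  have hΦint : Integrable Φ (volume.prod volume) := by
    apply Integrable.mono' (hgauss.mul_prod f.integrable.norm) hmeas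
    filter_upwards with p
    rw [hΦ]
    simp only [norm_mul, Complex.norm_exp]
    have h1 : (Complex.I * ((⟪x, p.1⟫ : ℝ) : ℂ)).re = 0 := by simp
    have h2 : (-b * ((‖p.1‖ ^ 2 : ℝ) : ℂ)).re = -b.re * ‖p.1‖ ^ 2 := by
      simp [← Complex.ofReal_pow, Complex.mul_re]
    have h3 : (-Complex.I * ((⟪p.1, p.2⟫ : ℝ) : ℂ)).re = 0 := by simp
    rw [h1, h2, h3]
    simp
  -- step 1 : rewrite using hFf and pull out c
  have step1 : (∫ k : V, Complex.exp (Complex.I * (⟪x, k⟫ : ℝ))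
        * (Complex.exp (-b * (‖k‖ ^ 2 : ℝ)) * Ff k))
      = (c : ℂ) * ∫ k : V, ∫ y : V, Φ (k, y) := by
    rw [← integral_const_mul]
    apply integral_congr_ae
    filter_upwards with k
    rw [hFf k]
    rw [show (Complex.exp (Complex.I * (⟪x, k⟫ : ℝ))
        * (Complex.exp (-b * (‖k‖ ^ 2 : ℝ)) * ((c : ℂ)
          * ∫ y : V, Complex.exp (-Complex.I * (⟪k, y⟫ : ℝ)) * f y)))
      = (c : ℂ) * ((Complex.exp (Complex.I * (⟪x, k⟫ : ℝ)) * Complex.exp (-b * (‖k‖ ^ 2 : ℝ)))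
          * ∫ y : V, Complex.exp (-Complex.I * (⟪k, y⟫ : ℝ)) * f y) by ring]
    rw [← integral_const_mul]
  rw [step1, integral_integral_swap hΦint]
  -- step 2 : evaluate the inner integral
  have step2 : ∀ y : EuclideanSpace ℝ (Fin n), (∫ k : V, Φ (k, y))
      = ((π : ℂ) / b) ^ ((n : ℂ) / 2) * (Complex.exp (-(‖x - y‖ ^ 2 : ℝ) / (4 * b)) * f y) := by
    intro y
    have hcomb : ∀ k : V, Φ (k, y)
        = Complex.exp (-b * (‖k‖ : ℂ) ^ 2 + Complex.I * ((⟪x - y, k⟫ : ℝ) : ℂ)) * f y := by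
      intro k
      rw [hΦ]
      simp only
      rw [← Complex.exp_add, ← mul_assoc, ← Complex.exp_add]
      congr 2
      rw [inner_sub_left, real_inner_comm k y]
      push_cast
      ring
    calc (∫ k : V, Φ (k, y))
        = (∫ k : V, Complex.exp (-b * (‖k‖ : ℂ) ^ 2 + Complex.I * ((⟪x - y, k⟫ : ℝ) : ℂ))) * f y := by
          rw [← integral_mul_const]
          exact integral_congr_ae (Filter.Eventually.of_forall hcomb)
      _ = ((π : ℂ) / b) ^ ((n : ℂ) / 2) * (Complex.exp (-(‖x - y‖ ^ 2 : ℝ) / (4 * b)) * f y) := by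
          rw [GaussianFourier.integral_cexp_neg_mul_sq_norm_add hb Complex.I (x - y)]
          rw [finrank_euclideanSpace_fin]
          rw [mul_assoc]
          congr 2
          rw [Complex.I_sq]
          push_cast
          ring
  calc (↑c : ℂ) * ∫ (y : V), ∫ (k : V), Φ (k, y)
      = (↑c : ℂ) * ∫ (y : V), ((π : ℂ) / b) ^ ((n : ℂ) / 2)
          * (Complex.exp (-(‖x - y‖ ^ 2 : ℝ) / (4 * b)) * f y) := by
        congr 1
        exact integral_congr_ae (Filter.Eventually.of_forall step2)
    _ = (↑c : ℂ) * (((π : ℂ) / b) ^ ((n : ℂ) / 2)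
          * ∫ (y : V), Complex.exp (-(‖x - y‖ ^ 2 : ℝ) / (4 * b)) * f y) := by
        rw [integral_const_mul]

/-- **Dollard decomposition** of the free Schrödinger propagator: for a Schwartz function
`f` on `ℝⁿ` and `t > 0`, `(e^{itΔ}f)(x) = (2it)^{−n/2} e^{i|x|²/(4t)} (2π)^{−n/2}
∫ e^{−i x·y/(2t)} e^{i|y|²/(4t)} f(y) dy`, i.e. `e^{itΔ} = M_t D_t 𝓕 M_t`. -/
theorem stmt_9 (n : ℕ) (hn : 1 ≤ n) (t : ℝ) (ht : 0 < t)
    (f : SchwartzMap (EuclideanSpace ℝ (Fin n)) ℂ)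
    (Ff : EuclideanSpace ℝ (Fin n) → ℂ)
    (hFf : ∀ k, Ff k = ((2 * π : ℝ) ^ (-(n : ℝ) / 2) : ℝ)
      * ∫ x : EuclideanSpace ℝ (Fin n), Complex.exp (-Complex.I * (⟪k, x⟫ : ℝ)) * f x)
    (u : EuclideanSpace ℝ (Fin n) → ℂ)
    (hu : ∀ x, u x = ((2 * π : ℝ) ^ (-(n : ℝ) / 2) : ℝ)
      * ∫ k : EuclideanSpace ℝ (Fin n), Complex.exp (Complex.I * (⟪x, k⟫ : ℝ))
          * (Complex.exp (-Complex.I * (t : ℝ) * (‖k‖ ^ 2 : ℝ)) * Ff k)) :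
    ∀ x : EuclideanSpace ℝ (Fin n),
      u x = (2 * Complex.I * (t : ℂ)) ^ (-(n : ℂ) / 2)
        * Complex.exp (Complex.I * (‖x‖ ^ 2 : ℝ) / (4 * (t : ℝ)))
        * (((2 * π : ℝ) ^ (-(n : ℝ) / 2) : ℝ)
          * ∫ y : EuclideanSpace ℝ (Fin n),
              Complex.exp (-Complex.I * (⟪x, y⟫ : ℝ) / (2 * (t : ℝ)))
                * (Complex.exp (Complex.I * (‖y‖ ^ 2 : ℝ) / (4 * (t : ℝ))) * f y)) := by
  intro x
  obtain ⟨hFint, hFcont⟩ := Ff_props f Ff hFf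
  set c : ℝ := (2 * π : ℝ) ^ (-(n : ℝ) / 2) with hc
  set J : ℂ → ℂ := fun b => ∫ k : EuclideanSpace ℝ (Fin n),
    Complex.exp (Complex.I * (⟪x, k⟫ : ℝ)) * (Complex.exp (-b * (‖k‖ ^ 2 : ℝ)) * Ff k) with hJ
  set K : ℂ → ℂ := fun b => ∫ y : EuclideanSpace ℝ (Fin n),
    Complex.exp (-(‖x - y‖ ^ 2 : ℝ) / (4 * b)) * f y with hK
  have htne : (t : ℂ) ≠ 0 := by exact_mod_cast ht.ne'
  have hItne : Complex.I * (t : ℂ) ≠ 0 := mul_ne_zero Complex.I_ne_zero htne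
  have huux : u x = (c : ℂ) * J (Complex.I * t) := by
    rw [hu x, hJ]
    congr 1
    apply integral_congr_ae
    filter_upwards with k
    congr 2
    ring
  -- limit A
  have limA : Tendsto (fun ε : ℝ => J ((ε : ℂ) + Complex.I * t)) (𝓝[>] (0:ℝ))
      (𝓝 (J (Complex.I * t))) := by
    apply tendsto_integral_filter_of_dominated_convergence (fun k => ‖Ff k‖)
    · filter_upwards with ε
      apply Continuous.aestronglyMeasurable
      have c1 : Continuous fun k : EuclideanSpace ℝ (Fin n) => ((⟪x, k⟫ : ℝ) : ℂ) :=
        Complex.continuous_ofReal.comp (Continuous.inner continuous_const continuous_id)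
      have c2 : Continuous fun k : EuclideanSpace ℝ (Fin n) => ((‖k‖ ^ 2 : ℝ) : ℂ) :=
        Complex.continuous_ofReal.comp ((continuous_norm).pow 2)
      exact (Complex.continuous_exp.comp (continuous_const.mul c1)).mul
        ((Complex.continuous_exp.comp (continuous_const.mul c2)).mul hFcont)
    · filter_upwards [self_mem_nhdsWithin] with ε (hε : 0 < ε)
      filter_upwards with k
      rw [norm_mul, norm_mul]
      have e1 : ‖Complex.exp (Complex.I * ((⟪x, k⟫ : ℝ) : ℂ))‖ = 1 := by
        rw [Complex.norm_exp]; simp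
      have e2 : ‖Complex.exp (-((ε : ℂ) + Complex.I * t) * ((‖k‖ ^ 2 : ℝ) : ℂ))‖ ≤ 1 := by
        rw [Complex.norm_exp, Real.exp_le_one_iff]
        have : (-((ε : ℂ) + Complex.I * t) * ((‖k‖ ^ 2 : ℝ) : ℂ)).re = -ε * ‖k‖ ^ 2 := by
          simp [Complex.mul_re, ← Complex.ofReal_pow]
        rw [this]
        nlinarith [sq_nonneg ‖k‖]
      rw [e1, one_mul]
      exact mul_le_of_le_one_left (norm_nonneg _) e2
    · exact hFint.norm
    · filter_upwards with k
      have hcont : Continuous fun ε : ℝ =>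
          Complex.exp (Complex.I * ((⟪x, k⟫ : ℝ) : ℂ))
            * (Complex.exp (-((ε : ℂ) + Complex.I * t) * ((‖k‖ ^ 2 : ℝ) : ℂ)) * Ff k) := by
        apply continuous_const.mul
        apply Continuous.mul _ continuous_const
        exact Complex.continuous_exp.comp (by fun_prop)
      have h0 := (hcont.tendsto 0).mono_left (nhdsWithin_le_nhds (s := Set.Ioi (0:ℝ)))
      simpa using h0
  have hbne : ∀ ε : ℝ, 0 < ε → ((ε : ℂ) + Complex.I * t) ≠ 0 := fun ε hε h =>
    hε.ne' (by simpa using congrArg Complex.re h)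
  -- limit B
  have limB : Tendsto (fun ε : ℝ => K ((ε : ℂ) + Complex.I * t)) (𝓝[>] (0:ℝ))
      (𝓝 (K (Complex.I * t))) := by
    apply tendsto_integral_filter_of_dominated_convergence (fun y => ‖f y‖)
    · filter_upwards with ε
      apply Continuous.aestronglyMeasurable
      apply Continuous.mul _ f.continuous
      apply Complex.continuous_exp.comp
      apply Continuous.div_const
      exact (Complex.continuous_ofReal.comp
        (((continuous_const.sub continuous_id).norm).pow 2)).neg
    · filter_upwards [self_mem_nhdsWithin] with ε (hε : 0 < ε)
      filter_upwards with y
      rw [norm_mul]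
      apply mul_le_of_le_one_left (norm_nonneg _)
      rw [Complex.norm_exp, Real.exp_le_one_iff]
      have hre : ((-(((‖x - y‖ ^ 2 : ℝ)) : ℂ)) / (4 * ((ε : ℂ) + Complex.I * t))).re
          = (-(‖x - y‖ ^ 2)) * ((4 * ((ε : ℂ) + Complex.I * t))⁻¹).re := by
        rw [div_eq_mul_inv, ← Complex.ofReal_neg, Complex.re_ofReal_mul]
      rw [hre]
      apply mul_nonpos_of_nonpos_of_nonneg
      · simp [sq_nonneg]
      · rw [Complex.inv_re]
        apply div_nonneg _ (Complex.normSq_nonneg _)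
        simp [Complex.mul_re]
        positivity
    · exact f.integrable.norm
    · filter_upwards with y
      have hden : ContinuousAt (fun ε : ℝ => (4 : ℂ) * ((ε : ℂ) + Complex.I * t)) 0 := by
        fun_prop
      have hdenne : (4 : ℂ) * (((0:ℝ) : ℂ) + Complex.I * t) ≠ 0 := by
        simp only [Complex.ofReal_zero, zero_add]
        exact mul_ne_zero (by norm_num) hItne
      have hca : ContinuousAt (fun ε : ℝ =>
          Complex.exp ((-(((‖x - y‖ ^ 2 : ℝ)) : ℂ)) / (4 * ((ε : ℂ) + Complex.I * t)))
            * f y) 0 := by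
        exact ((Complex.continuous_exp.continuousAt.comp
          (ContinuousAt.div continuousAt_const hden hdenne)).mul continuousAt_const)
      have h0 := (hca.tendsto).mono_left (nhdsWithin_le_nhds (s := Set.Ioi (0:ℝ)))
      simpa using h0
  -- the cpow factor limit
  have hdivval : (π : ℂ) / (Complex.I * t) = ((π / t : ℝ) : ℂ) * (-Complex.I) := by
    rw [div_eq_iff hItne]
    push_cast [ht.ne']
    field_simp
    ring_nf
    simp [Complex.I_sq]
  have him : ((π : ℂ) / (Complex.I * t)).im ≠ 0 := by
    rw [hdivval]
    have : (0:ℝ) < π / t := div_pos Real.pi_pos ht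
    simp [Complex.mul_im]
    exact ht.ne'
  have hpow : Tendsto (fun ε : ℝ => ((π : ℂ) / ((ε : ℂ) + Complex.I * t)) ^ ((n : ℂ) / 2))
      (𝓝[>] (0:ℝ)) (𝓝 (((π : ℂ) / (Complex.I * t)) ^ ((n : ℂ) / 2))) := by
    have h1 : ContinuousAt (fun ε : ℝ => (π : ℂ) / ((ε : ℂ) + Complex.I * t)) 0 := by
      apply ContinuousAt.div continuousAt_const (by fun_prop)
      simp only [Complex.ofReal_zero, zero_add]
      exact hItne
    have h2 : ContinuousAt (fun z : ℂ => z ^ ((n : ℂ) / 2)) ((π : ℂ) / (Complex.I * t)) :=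
      continuousAt_cpow_const (Complex.mem_slitPlane_iff.mpr (Or.inr him))
    have h4 : Tendsto (fun ε : ℝ => (π : ℂ) / ((ε : ℂ) + Complex.I * t)) (𝓝 (0:ℝ))
        (𝓝 ((π : ℂ) / (Complex.I * t))) := by
      have := h1.tendsto
      simpa using this
    have h3 := (h2.tendsto.comp h4).mono_left (nhdsWithin_le_nhds (s := Set.Ioi (0:ℝ)))
    exact h3
  have limRHS : Tendsto (fun ε : ℝ => (c : ℂ)
        * (((π : ℂ) / ((ε : ℂ) + Complex.I * t)) ^ ((n : ℂ) / 2) * K ((ε : ℂ) + Complex.I * t)))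
      (𝓝[>] (0:ℝ))
      (𝓝 ((c : ℂ) * (((π : ℂ) / (Complex.I * t)) ^ ((n : ℂ) / 2) * K (Complex.I * t)))) :=
    tendsto_const_nhds.mul (hpow.mul limB)
  have heq : ∀ᶠ ε : ℝ in 𝓝[>] (0:ℝ), J ((ε : ℂ) + Complex.I * t) = (c : ℂ)
      * (((π : ℂ) / ((ε : ℂ) + Complex.I * t)) ^ ((n : ℂ) / 2) * K ((ε : ℂ) + Complex.I * t)) := by
    filter_upwards [self_mem_nhdsWithin] with ε (hε : 0 < ε)
    have hre : (0:ℝ) < ((ε : ℂ) + Complex.I * t).re := by simpa using hε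
    exact J_eval f Ff hFf hre x
  have hkey : J (Complex.I * t) = (c : ℂ)
      * (((π : ℂ) / (Complex.I * t)) ^ ((n : ℂ) / 2) * K (Complex.I * t)) :=
    tendsto_nhds_unique (limA.congr' heq) limRHS
  have hKval : K (Complex.I * t) = Complex.exp (Complex.I * (‖x‖ ^ 2 : ℝ) / (4 * (t : ℝ)))
      * ∫ y : EuclideanSpace ℝ (Fin n),
          Complex.exp (-Complex.I * (⟪x, y⟫ : ℝ) / (2 * (t : ℝ)))
            * (Complex.exp (Complex.I * (‖y‖ ^ 2 : ℝ) / (4 * (t : ℝ))) * f y) := by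
    rw [hK]
    simp only
    rw [← integral_const_mul]
    apply integral_congr_ae
    filter_upwards with y
    rw [exp_split ht x y]
    ring
  rw [huux, hkey, hKval, ← const_eq n ht]
  ring

end
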